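/- There exists a compact set F ⊂ [0,1] (a fat Cantor set) with positive one-dimensional Lebesgue measure and empty interior such that, setting E = F × {0} ⊂ ℝ², the union U = ⋃_{x∈E} {y ∈ ℝ² : |y - x| = 1} has positive two-dimensional Lebesgue measure but empty interior. -/

import Mathlib

open MeasureTheory Set Metric ENNReal

noncomputable def ratEnum : ℕ → ℚ := (exists_surjective_nat ℚ).choose

lemma ratEnum_surj : Function.Surjective ratEnum := (exists_surjective_nat ℚ).choose_spec

noncomputable def fatG : Set ℝ :=
  ⋃ n : ℕ, Metric.ball ((ratEnum n : ℚ) : ℝ) ((2⁻¹ : ℝ) ^ (n + 3))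

noncomputable def fatF : Set ℝ := Icc 0 1 \ fatG

lemma fatG_open : IsOpen fatG := isOpen_iUnion fun _ => isOpen_ball

lemma fatF_closed : IsClosed fatF := isClosed_Icc.inter fatG_open.isClosed_compl

lemma fatF_subset : fatF ⊆ Icc 0 1 := diff_subset

lemma fatF_compact : IsCompact fatF :=
  isCompact_Icc.of_isClosed_subset fatF_closed fatF_subset

lemma rat_mem_fatG (q : ℚ) : (q : ℝ) ∈ fatG := by
  obtain ⟨n, rfl⟩ := ratEnum_surj q
  exact mem_iUnion.2 ⟨n, mem_ball_self (by positivity)⟩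

lemma fatF_interior : interior fatF = ∅ := by
  by_contra h
  obtain ⟨q, hq⟩ := Rat.denseRange_cast.exists_mem_open isOpen_interior
    (nonempty_iff_ne_empty.2 h)
  exact (interior_subset hq).2 (rat_mem_fatG q)

lemma fatG_volume : volume fatG ≤ 1/2 := by
  refine le_trans (measure_iUnion_le _) ?_
  have hb : ∀ n : ℕ, volume (Metric.ball ((ratEnum n : ℚ) : ℝ) ((2⁻¹ : ℝ) ^ (n + 3)))
      = (2⁻¹ : ℝ≥0∞) ^ (n + 2) := by
    intro n
    rw [Real.volume_ball]
    rw [show (2 : ℝ) * (2⁻¹ : ℝ) ^ (n+3) = (2⁻¹ : ℝ) ^ (n+2) by ring]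
    rw [ENNReal.ofReal_pow (by norm_num), ENNReal.ofReal_inv_of_pos two_pos]
    norm_num
  calc ∑' n : ℕ, volume (Metric.ball ((ratEnum n : ℚ) : ℝ) ((2⁻¹ : ℝ) ^ (n + 3)))
      = ∑' n : ℕ, (2⁻¹ : ℝ≥0∞) ^ (n + 2) := by simp_rw [hb]
    _ = (∑' n : ℕ, (2⁻¹ : ℝ≥0∞) ^ n) * (2⁻¹ : ℝ≥0∞) ^ 2 := by
        simp_rw [pow_add]; rw [ENNReal.tsum_mul_right]
    _ ≤ 1/2 := by
        rw [ENNReal.tsum_geometric, ENNReal.one_sub_inv_two, inv_inv, pow_two,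
          ← mul_assoc, ENNReal.mul_inv_cancel (by norm_num) (by norm_num), one_mul, one_div]

lemma fatF_volume : 0 < volume fatF := by
  have h1 : (1 : ℝ≥0∞) ≤ volume fatF + 1/2 := by
    calc (1 : ℝ≥0∞) = volume (Icc (0:ℝ) 1) := by simp
      _ ≤ volume (fatF ∪ fatG) := by
          apply measure_mono; intro x hx
          by_cases hg : x ∈ fatG
          · exact Or.inr hg
          · exact Or.inl ⟨hx, hg⟩
      _ ≤ volume fatF + volume fatG := measure_union_le _ _
      _ ≤ volume fatF + 1/2 := add_le_add le_rfl fatG_volume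
  rw [pos_iff_ne_zero]
  intro h0
  rw [h0, zero_add] at h1
  norm_num at h1



lemma aux_union_empty_interior {A B : Set ℝ} (hA : IsClosed A)
    (hAi : interior A = ∅) (hBi : interior B = ∅) : interior (A ∪ B) = ∅ := by
  have h1 : interior (A ∪ B) \ A ⊆ interior B := by
    apply (isOpen_interior.sdiff hA).subset_interior_iff.2
    intro x hx
    rcases interior_subset hx.1 with h | h
    · exact absurd h hx.2
    · exact h
  have h2 : interior (A ∪ B) ⊆ A := by
    intro x hx
    by_contra hxA
    exact absurd (h1 ⟨hx, hxA⟩) (by simp [hBi])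
  have h3 : interior (A ∪ B) ⊆ interior A :=
    interior_maximal h2 isOpen_interior
  rw [hAi] at h3
  exact eq_empty_of_subset_empty h3

variable {F : Set ℝ}

def circU (F : Set ℝ) : Set (ℝ × ℝ) := {y : ℝ × ℝ | ∃ t ∈ F, (y.1 - t) ^ 2 + y.2 ^ 2 = 1}

lemma slice_eq (hy : (y:ℝ) ^ 2 ≤ 1) :
    {x : ℝ | (x, y) ∈ circU F} =
      ((fun x : ℝ => x - Real.sqrt (1 - y^2)) ⁻¹' F) ∪
      ((fun x : ℝ => x + Real.sqrt (1 - y^2)) ⁻¹' F) := by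
  set c := Real.sqrt (1 - y^2) with hc
  have hc2 : c ^ 2 = 1 - y ^ 2 := Real.sq_sqrt (by linarith)
  ext x
  simp only [circU, mem_setOf_eq, mem_union, mem_preimage]
  constructor
  · rintro ⟨t, htF, ht⟩
    have h2 : (x - t) ^ 2 = c ^ 2 := by linarith
    rcases sq_eq_sq_iff_eq_or_eq_neg.1 h2 with h | h
    · left; rw [show x - c = t by linarith]; exact htF
    · right; rw [show x + c = t by linarith]; exact htF
  · rintro (h | h)
    · exact ⟨x - c, h, by nlinarith⟩
    · exact ⟨x + c, h, by nlinarith⟩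

lemma circU_compact (hF : IsCompact F) (hsub : F ⊆ Icc 0 1) : IsCompact (circU F) := by
  have hK : IsCompact {p : ℝ × (ℝ × ℝ) | p.1 ∈ F ∧ (p.2.1 - p.1)^2 + p.2.2^2 = 1} := by
    apply (isCompact_Icc.prod (isCompact_Icc.prod isCompact_Icc)).of_isClosed_subset
      (s := Icc (0:ℝ) 1 ×ˢ (Icc (-1:ℝ) 2 ×ˢ Icc (-1:ℝ) 1))
    · apply IsClosed.inter
      · exact hF.isClosed.preimage continuous_fst
      · exact isClosed_eq (by fun_prop) continuous_const
    · rintro ⟨t, x, y⟩ ⟨htF, heq⟩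
      simp only [mem_setOf_eq] at heq
      have ht := hsub htF
      have hx2 : (x - t)^2 ≤ 1 := by nlinarith [sq_nonneg y]
      have hy2 : y^2 ≤ 1 := by nlinarith [sq_nonneg (x - t)]
      have hxa : |x - t| ≤ 1 := by rwa [← sq_le_one_iff_abs_le_one]
      have hya : |y| ≤ 1 := by rwa [← sq_le_one_iff_abs_le_one]
      rw [abs_le] at hxa hya
      exact ⟨ht, ⟨by constructor <;> [linarith [ht.1]; linarith [ht.2]], hya.1, hya.2⟩⟩
  have : circU F = Prod.snd '' {p : ℝ × (ℝ × ℝ) | p.1 ∈ F ∧ (p.2.1 - p.1)^2 + p.2.2^2 = 1} := by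
    ext p
    simp only [circU, mem_setOf_eq, mem_image]
    constructor
    · rintro ⟨t, htF, ht⟩; exact ⟨(t, p), ⟨htF, ht⟩, rfl⟩
    · rintro ⟨⟨t, q⟩, ⟨htF, ht⟩, rfl⟩; exact ⟨t, htF, ht⟩
  rw [this]
  exact hK.image continuous_snd

lemma circU_pos (hF : IsCompact F) (hsub : F ⊆ Icc 0 1) (hpos : 0 < volume F) :
    0 < volume (circU F) := by
  have hmeas : MeasurableSet (circU F) := (circU_compact hF hsub).isClosed.measurableSet
  rw [show (volume : Measure (ℝ × ℝ)) = (volume : Measure ℝ).prod volume from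
    Measure.volume_eq_prod ℝ ℝ]
  rw [Measure.prod_apply_symm hmeas]
  have hlow : ∀ y ∈ Ioo (-1:ℝ) 1, volume F ≤ volume ((fun x => (x, y)) ⁻¹' circU F) := by
    intro y hy
    have hy2 : y^2 ≤ 1 := by nlinarith [hy.1, hy.2]
    have : (fun x => (x, y)) ⁻¹' circU F = {x : ℝ | (x, y) ∈ circU F} := rfl
    rw [this, slice_eq hy2]
    refine le_trans ?_ (measure_mono subset_union_left)
    rw [show (fun x : ℝ => x - Real.sqrt (1 - y^2)) = (fun x : ℝ => x + -Real.sqrt (1 - y^2)) by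
      funext x; ring]
    rw [measure_preimage_add_right]
  have hle : volume F * volume (Ioo (-1:ℝ) 1)
      ≤ ∫⁻ y, volume ((fun x => (x, y)) ⁻¹' circU F) := by
    calc volume F * volume (Ioo (-1:ℝ) 1)
        = ∫⁻ _ in Ioo (-1:ℝ) 1, volume F := by rw [setLIntegral_const]
      _ ≤ ∫⁻ y in Ioo (-1:ℝ) 1, volume ((fun x => (x, y)) ⁻¹' circU F) :=
          setLIntegral_mono' measurableSet_Ioo hlow
      _ ≤ ∫⁻ y, volume ((fun x => (x, y)) ⁻¹' circU F) := setLIntegral_le_lintegral _ _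
  refine lt_of_lt_of_le ?_ hle
  apply ENNReal.mul_pos hpos.ne'
  rw [Real.volume_Ioo]
  simp [ENNReal.ofReal_pos]

lemma translate_interior_empty (hint : interior F = ∅) (c : ℝ) :
    interior ((fun x : ℝ => x + c) ⁻¹' F) = ∅ := by
  have := (Homeomorph.addRight c).preimage_interior F
  simp only [Homeomorph.coe_addRight] at this
  rw [← this, hint, preimage_empty]

lemma circU_interior (hF : IsClosed F) (hint : interior F = ∅) :
    interior (circU F) = ∅ := by
  by_contra h
  obtain ⟨p, hp⟩ := nonempty_iff_ne_empty.2 h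
  obtain ⟨ε, hε, hball⟩ := Metric.isOpen_iff.1 isOpen_interior p hp
  have hballU : Metric.ball p ε ⊆ circU F := hball.trans interior_subset
  have hpU : p ∈ circU F := interior_subset hp
  obtain ⟨t, htF, ht⟩ := hpU
  have hp2 : p.2 ^ 2 ≤ 1 := by nlinarith [sq_nonneg (p.1 - t)]
  have hp2' : |p.2| ≤ 1 := (sq_le_one_iff_abs_le_one _).1 hp2
  rw [abs_le] at hp2'
  obtain ⟨y, hy⟩ : (Ioo (max (p.2 - ε) (-1)) (min (p.2 + ε) 1)).Nonempty := by
    apply nonempty_Ioo.2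
    simp only [max_lt_iff, lt_min_iff]
    constructor
    · constructor <;> [linarith; linarith [hp2'.2]]
    · constructor <;> [linarith [hp2'.1]; linarith]
  have hy1 : y ∈ Ioo (-1:ℝ) 1 := ⟨(le_max_right _ _).trans_lt hy.1, hy.2.trans_le (min_le_right _ _)⟩
  have hyd : |y - p.2| < ε := by
    rw [abs_lt]
    constructor
    · linarith [(le_max_left _ _).trans_lt hy.1]
    · linarith [hy.2.trans_le (min_le_left _ _)]
  have hy2 : y ^ 2 ≤ 1 := by nlinarith [hy1.1, hy1.2]
  set c := Real.sqrt (1 - y^2) with hc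
  have hIoo : Ioo (p.1 - ε) (p.1 + ε) ⊆ {x : ℝ | (x, y) ∈ circU F} := by
    intro x hx
    apply hballU
    rw [Metric.mem_ball, Prod.dist_eq]
    simp only [Real.dist_eq, max_lt_iff]
    constructor
    · rw [abs_lt]; constructor <;> [linarith [hx.1]; linarith [hx.2]]
    · exact hyd
  rw [slice_eq hy2] at hIoo
  set A := (fun x : ℝ => x - c) ⁻¹' F
  set B := (fun x : ℝ => x + c) ⁻¹' F
  have hA : IsClosed A := hF.preimage (by fun_prop)
  have hB : IsClosed B := hF.preimage (by fun_prop)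
  have hAi : interior A = ∅ := by
    have : A = (fun x : ℝ => x + (-c)) ⁻¹' F := by ext x; simp [A, sub_eq_add_neg]
    rw [this]; exact translate_interior_empty hint (-c)
  have hBi : interior B = ∅ := translate_interior_empty hint c
  have hUi := aux_union_empty_interior hA hAi hBi
  have : Ioo (p.1 - ε) (p.1 + ε) ⊆ interior (A ∪ B) :=
    interior_maximal hIoo isOpen_Ioo
  rw [hUi] at this
  exact absurd (this ⟨by linarith, by linarith⟩) (notMem_empty p.1)


/-- There is a compact fat Cantor set `F ⊂ [0,1]` of positive measure
and empty interior such that the union of unit circles centered on `F × {0}` has positive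
two-dimensional Lebesgue measure but empty interior. -/
theorem stmt17 :
    ∃ F : Set ℝ, IsCompact F ∧ F ⊆ Icc 0 1 ∧ 0 < volume F ∧ interior F = ∅ ∧
      (0 < volume {y : ℝ × ℝ | ∃ t ∈ F, (y.1 - t) ^ 2 + y.2 ^ 2 = 1} ∧
        interior {y : ℝ × ℝ | ∃ t ∈ F, (y.1 - t) ^ 2 + y.2 ^ 2 = 1} = ∅) := by
  refine ⟨fatF, fatF_compact, fatF_subset, fatF_volume, fatF_interior, ?_, ?_⟩
  · exact circU_pos fatF_compact fatF_subset fatF_volume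
  · exact circU_interior fatF_closed fatF_interior
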